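/- Let V be a finite-dimensional vector space over a field F of characteristic not 2, and let u be an automorphism of V such that both u₁ := id + a₁ and u₂ := id + a₂ satisfy a₁² = a₂² = 0 and u = u₁u₂, where additionally u - id is invertible. Then V = range a₁ ⊕ range a₂, and a₁ restricts to a bijection from range a₂ onto range a₁, while a₂ restricts to a bijection from range a₁ onto range a₂. -/

import Mathlib

open LinearMap Submodule

lemma stmt9_bijOn_aux {F V : Type*} [Field F]
    [AddCommGroup V] [Module F V] [FiniteDimensional F V]
    (a b : Module.End F V)
    (hker : LinearMap.ker a = LinearMap.range a)
    (hdisj : Disjoint (LinearMap.range a) (LinearMap.range b))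
    (hrank : Module.finrank F (LinearMap.range a) = Module.finrank F (LinearMap.range b)) :
    Set.BijOn ⇑a (LinearMap.range b : Set V) (LinearMap.range a : Set V) := by
  have hinj : Set.InjOn ⇑a (LinearMap.range b : Set V) := by
    intro x hx y hy hxy
    have h1 : x - y ∈ LinearMap.ker a := by
      simp [LinearMap.mem_ker, map_sub, hxy]
    rw [hker] at h1
    have h2 : x - y ∈ LinearMap.range b := sub_mem hx hy
    have h0 := hdisj.le_bot ⟨h1, h2⟩
    simpa [sub_eq_zero] using h0
  refine ⟨fun x _ => ⟨x, rfl⟩, hinj, ?_⟩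
  have hinj' : Function.Injective (a.domRestrict (LinearMap.range b)) := by
    intro x y hxy
    exact Subtype.ext (hinj x.2 y.2 hxy)
  have hfr : Module.finrank F (LinearMap.range (a.domRestrict (LinearMap.range b)))
      = Module.finrank F (LinearMap.range b) :=
    LinearMap.finrank_range_of_inj hinj'
  have hmaple : LinearMap.range (a.domRestrict (LinearMap.range b)) ≤ LinearMap.range a := by
    rintro z ⟨⟨x, hx⟩, rfl⟩
    exact ⟨x, rfl⟩
  have heq : LinearMap.range (a.domRestrict (LinearMap.range b)) = LinearMap.range a :=
    Submodule.eq_of_le_of_finrank_le hmaple (by omega)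
  intro z hz
  rw [← heq] at hz
  obtain ⟨⟨x, hx⟩, rfl⟩ := hz
  exact ⟨x, hx, rfl⟩

/-- If `u = (1 + a₁)(1 + a₂)` with `a₁² = a₂² = 0` and `u - id` invertible, then
`V = range a₁ ⊕ range a₂`, `a₁` restricts to a bijection from `range a₂` onto `range a₁`,
and `a₂` restricts to a bijection from `range a₁` onto `range a₂`. -/
theorem stmt9 {F V : Type*} [Field F] (h2 : (2 : F) ≠ 0)
    [AddCommGroup V] [Module F V] [FiniteDimensional F V]
    (a₁ a₂ : Module.End F V) (ha₁ : a₁ ^ 2 = 0) (ha₂ : a₂ ^ 2 = 0)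
    (u : Module.End F V) (hu : u = (1 + a₁) * (1 + a₂))
    (hinv : Function.Bijective ((u - 1 : Module.End F V))) :
    IsCompl (LinearMap.range a₁) (LinearMap.range a₂)
    ∧ Set.BijOn ⇑a₁ (LinearMap.range a₂ : Set V) (LinearMap.range a₁ : Set V)
    ∧ Set.BijOn ⇑a₂ (LinearMap.range a₁ : Set V) (LinearMap.range a₂ : Set V) := by
  set n := Module.finrank F V
  set r₁ := LinearMap.range a₁
  set r₂ := LinearMap.range a₂
  -- range ≤ ker
  have hrk₁ : r₁ ≤ LinearMap.ker a₁ := by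
    rintro x ⟨y, rfl⟩
    have : (a₁ * a₁) y = 0 := by rw [← pow_two, ha₁]; rfl
    simpa [LinearMap.mem_ker, Module.End.mul_apply] using this
  have hrk₂ : r₂ ≤ LinearMap.ker a₂ := by
    rintro x ⟨y, rfl⟩
    have : (a₂ * a₂) y = 0 := by rw [← pow_two, ha₂]; rfl
    simpa [LinearMap.mem_ker, Module.End.mul_apply] using this
  -- sup = top
  have htop : r₁ ⊔ r₂ = ⊤ := by
    rw [eq_top_iff]
    intro v _
    obtain ⟨x, hx⟩ := hinv.2 v
    have hv : v = a₁ (x + a₂ x) + a₂ x := by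
      have : (u - 1) x = a₁ x + a₂ x + a₁ (a₂ x) := by
        rw [hu]
        simp [Module.End.mul_apply, LinearMap.sub_apply, LinearMap.add_apply, Module.End.one_apply, map_add]
        abel
      rw [← hx, this, map_add]
      abel
    rw [hv]
    exact add_mem (Submodule.mem_sup_left ⟨_, rfl⟩) (Submodule.mem_sup_right ⟨_, rfl⟩)
  -- finrank facts
  have hrn₁ : Module.finrank F r₁ + Module.finrank F (LinearMap.ker a₁) = n :=
    LinearMap.finrank_range_add_finrank_ker a₁
  have hrn₂ : Module.finrank F r₂ + Module.finrank F (LinearMap.ker a₂) = n :=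
    LinearMap.finrank_range_add_finrank_ker a₂
  have hle₁ : Module.finrank F r₁ ≤ Module.finrank F (LinearMap.ker a₁) :=
    Submodule.finrank_mono hrk₁
  have hle₂ : Module.finrank F r₂ ≤ Module.finrank F (LinearMap.ker a₂) :=
    Submodule.finrank_mono hrk₂
  have hsupinf := Submodule.finrank_sup_add_finrank_inf_eq r₁ r₂
  rw [htop, finrank_top] at hsupinf
  have hinf0 : Module.finrank F (r₁ ⊓ r₂ : Submodule F V) = 0 := by omega
  have hbot : r₁ ⊓ r₂ = ⊥ := Submodule.finrank_eq_zero.mp hinf0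
  have hdisj : Disjoint r₁ r₂ := disjoint_iff.mpr hbot
  have hcompl : IsCompl r₁ r₂ := ⟨hdisj, codisjoint_iff.mpr htop⟩
  have hreq : Module.finrank F r₁ = Module.finrank F r₂ := by omega
  have hker₁ : LinearMap.ker a₁ = r₁ :=
    (Submodule.eq_of_le_of_finrank_le hrk₁ (by omega)).symm
  have hker₂ : LinearMap.ker a₂ = r₂ :=
    (Submodule.eq_of_le_of_finrank_le hrk₂ (by omega)).symm
  exact ⟨hcompl,
    stmt9_bijOn_aux a₁ a₂ hker₁ hdisj hreq,
    stmt9_bijOn_aux a₂ a₁ hker₂ hdisj.symm hreq.symm⟩
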